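/- For all integers L ≥ 0 and all integers a with |a| ≤ L, the q-trinomial T_0 satisfies T_0(L,a) = ∑_{k=0}^{L} (−1)^{L−k} q^{binom(L−k,2) + (a²−L²)/2} [L choose k]_q [2k choose k−a]_q. -/

import Mathlib

open Finset

/-- The variable `q`, realized as the generator of the field of rational functions over `ℚ`. -/
noncomputable def qq : RatFunc ℚ := RatFunc.X

/-- `(x)_n = ∏_{j=1}^n (1 - x^j)`. -/
noncomputable def qPoch (x : RatFunc ℚ) (n : ℕ) : RatFunc ℚ :=
  ∏ j ∈ Finset.range n, (1 - x ^ (j + 1))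

/-- Gaussian binomial coefficient `[n choose k]_x`, zero unless `0 ≤ k ≤ n`. -/
noncomputable def qBin (x : RatFunc ℚ) (n k : ℤ) : RatFunc ℚ :=
  if 0 ≤ k ∧ k ≤ n then qPoch x n.toNat / (qPoch x k.toNat * qPoch x (n - k).toNat) else 0

/-- The `q`-trinomial coefficient `[L, b; a]_2` in base `x`. -/
noncomputable def qTri (x : RatFunc ℚ) (L : ℕ) (b a : ℤ) : RatFunc ℚ :=
  ∑ k ∈ Finset.range (L + 1),
    x ^ ((k : ℤ) * (k + b)) * qBin x (L : ℤ) (k : ℤ) * qBin x ((L : ℤ) - k) ((k : ℤ) + a)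

/-- The `q`-trinomial `T_n(L, a)`, written in terms of `s = q^{1/2}` (so the base is `s^2`):
`T_n(L,a) = ∑ s^{r(r-n)} (s²)_L / ((s²)_{(L-a-r)/2} (s²)_{(L+a-r)/2} (s²)_r)`,
the sum over `r ≥ 0` with `L - a - r` even and `r ≤ L - |a|`; zero for `|a| > L`. -/
noncomputable def qT (s : RatFunc ℚ) (n : ℤ) (L : ℕ) (a : ℤ) : RatFunc ℚ :=
  ∑ r ∈ Finset.range (L + 1),
    if Even ((L : ℤ) - a - r) ∧ (r : ℤ) ≤ (L : ℤ) - |a| then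
      s ^ ((r : ℤ) * ((r : ℤ) - n)) * qPoch (s ^ 2) L /
        (qPoch (s ^ 2) (((L : ℤ) - a - r) / 2).toNat *
          qPoch (s ^ 2) (((L : ℤ) + a - r) / 2).toNat * qPoch (s ^ 2) r)
    else 0

/-- The Cartan matrix of the Lie algebra `A_n`. -/
def cartanA (n : ℕ) (i j : Fin n) : ℤ :=
  if i = j then 2 else if |(i : ℤ) - (j : ℤ)| = 1 then -1 else 0

lemma qq_ne_zero : qq ≠ 0 := RatFunc.X_ne_zero

lemma qq_pow_ne_one {k : ℕ} (hk : k ≠ 0) : qq ^ k ≠ 1 := by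
  intro hcon
  have h1 : (algebraMap (Polynomial ℚ) (RatFunc ℚ)) (Polynomial.X ^ k) =
      (algebraMap (Polynomial ℚ) (RatFunc ℚ)) 1 := by
    simpa [qq, RatFunc.algebraMap_X] using hcon
  have h2 : (Polynomial.X : Polynomial ℚ) ^ k = 1 := RatFunc.algebraMap_injective ℚ h1
  have := congrArg Polynomial.natDegree h2
  simp [Polynomial.natDegree_X_pow] at this
  exact hk this

lemma qPoch_ne_zero (n : ℕ) : qPoch (qq ^ 2) n ≠ 0 := by
  rw [qPoch]
  apply Finset.prod_ne_zero_iff.mpr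
  intro j _ hcon
  have h1 : (qq ^ 2) ^ (j+1) = 1 := by linear_combination -hcon
  rw [← pow_mul] at h1
  exact qq_pow_ne_one (by omega) h1

lemma qPoch_zero : qPoch (qq ^ 2) 0 = 1 := by simp [qPoch]

lemma qPoch_succ (n : ℕ) : qPoch (qq ^ 2) (n + 1) = qPoch (qq ^ 2) n * (1 - (qq ^ 2) ^ (n + 1)) := by
  rw [qPoch, qPoch, Finset.prod_range_succ]

lemma x2_ne_zero : (qq ^ 2 : RatFunc ℚ) ≠ 0 := pow_ne_zero _ qq_ne_zero

lemma qBin_of_not {n k : ℤ} (h : ¬ (0 ≤ k ∧ k ≤ n)) : qBin (qq ^ 2) n k = 0 := if_neg h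

lemma qBin_def {n k : ℤ} (h1 : 0 ≤ k) (h2 : k ≤ n) :
    qBin (qq ^ 2) n k =
      qPoch (qq ^ 2) n.toNat / (qPoch (qq ^ 2) k.toNat * qPoch (qq ^ 2) (n - k).toNat) :=
  if_pos ⟨h1, h2⟩

lemma qBin_zero {n : ℤ} (h : 0 ≤ n) : qBin (qq ^ 2) n 0 = 1 := by
  rw [qBin_def le_rfl h]
  simp [qPoch_zero, div_self (qPoch_ne_zero _)]

lemma qBin_self {n : ℤ} (h : 0 ≤ n) : qBin (qq ^ 2) n n = 1 := by
  rw [qBin_def h le_rfl]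
  simp [qPoch_zero, div_self (qPoch_ne_zero _)]

lemma qBin_symm {n k : ℤ} (h : 0 ≤ n) : qBin (qq ^ 2) n k = qBin (qq ^ 2) n (n - k) := by
  by_cases hk : 0 ≤ k ∧ k ≤ n
  · rw [qBin_def hk.1 hk.2, qBin_def (by omega) (by omega)]
    have : n - (n - k) = k := by ring
    rw [this, mul_comm]
  · rw [qBin_of_not hk, qBin_of_not (by omega)]

lemma pascal_core (i m : ℕ) :
    qPoch (qq^2) (i+m+2) / (qPoch (qq^2) (i+1) * qPoch (qq^2) (m+1)) =
      (qq^2)^(m+1) * (qPoch (qq^2) (i+m+1) / (qPoch (qq^2) i * qPoch (qq^2) (m+1))) +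
        qPoch (qq^2) (i+m+1) / (qPoch (qq^2) (i+1) * qPoch (qq^2) m) := by
  have h1 : qPoch (qq^2) (i+m+2) = qPoch (qq^2) (i+m+1) * (1 - (qq^2)^(i+m+2)) := qPoch_succ _
  have h2 : qPoch (qq^2) (i+1) = qPoch (qq^2) i * (1 - (qq^2)^(i+1)) := qPoch_succ _
  have h3 : qPoch (qq^2) (m+1) = qPoch (qq^2) m * (1 - (qq^2)^(m+1)) := qPoch_succ _
  rw [h1, h2, h3]
  have n1 := qPoch_ne_zero (i+m+1)
  have n2 := qPoch_ne_zero i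
  have n3 := qPoch_ne_zero m
  have n4 : (1 : RatFunc ℚ) - (qq^2)^(i+1) ≠ 0 := by
    intro hcon
    have : (qq^2)^(i+1) = 1 := by linear_combination -hcon
    rw [← pow_mul] at this; exact qq_pow_ne_one (by omega) this
  have n5 : (1 : RatFunc ℚ) - (qq^2)^(m+1) ≠ 0 := by
    intro hcon
    have : (qq^2)^(m+1) = 1 := by linear_combination -hcon
    rw [← pow_mul] at this; exact qq_pow_ne_one (by omega) this
  field_simp
  ring

lemma pascalB (n : ℕ) (k : ℤ) :
    qBin (qq^2) ((n:ℤ)+1) k =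
      (qq^2) ^ ((n:ℤ)+1-k) * qBin (qq^2) (n:ℤ) (k-1) + qBin (qq^2) (n:ℤ) k := by
  rcases lt_trichotomy k 0 with hk | hk | hk
  · rw [qBin_of_not (by omega), qBin_of_not (by omega), qBin_of_not (by omega)]; simp
  · subst hk
    rw [qBin_zero (by positivity), qBin_zero (by exact_mod_cast Nat.zero_le n),
      qBin_of_not (by omega)]
    simp
  · rcases lt_trichotomy k ((n:ℤ)+1) with hk2 | hk2 | hk2
    · -- 1 ≤ k ≤ n
      obtain ⟨i, rfl⟩ : ∃ i : ℕ, k = (i:ℤ) + 1 := ⟨(k-1).toNat, by omega⟩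
      obtain ⟨m, rfl⟩ : ∃ m : ℕ, n = i + m + 1 := ⟨n - i - 1, by omega⟩
      rw [qBin_def (by omega) (by omega), qBin_def (by omega) (by omega),
        qBin_def (by omega) (by omega)]
      have e1 : (((i:ℤ)+(m:ℤ)+1:ℤ)+1).toNat = i + m + 2 := by omega
      have e2 : ((i:ℤ)+1).toNat = i + 1 := by omega
      have e3 : ((((i:ℤ)+(m:ℤ)+1) + 1) - ((i:ℤ)+1)).toNat = m + 1 := by omega
      have e4 : ((i:ℤ)+1-1).toNat = i := by omega
      have e5 : (((i:ℤ)+(m:ℤ)+1) - ((i:ℤ)+1-1)).toNat = m + 1 := by omega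
      have e6 : ((i:ℤ)+(m:ℤ)+1).toNat = i + m + 1 := by omega
      have e7 : (((i:ℤ)+(m:ℤ)+1) - ((i:ℤ)+1)).toNat = m := by omega
      have ec : ((i + m + 1 : ℕ) : ℤ) = (i:ℤ)+(m:ℤ)+1 := by push_cast; ring
      rw [ec, e1, e2, e3, e4, e5, e6, e7]
      have ez : ((i:ℤ)+(m:ℤ)+1) + 1 - ((i:ℤ)+1) = ((m+1 : ℕ) : ℤ) := by push_cast; ring
      rw [ez, zpow_natCast]
      have := pascal_core i m
      convert this using 3 <;> omega
    · rw [hk2]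
      rw [show (n:ℤ) + 1 - 1 = (n:ℤ) by ring]
      rw [qBin_self (by positivity), qBin_self (by exact_mod_cast Nat.zero_le n),
        qBin_of_not (by omega)]
      rw [show (n:ℤ) + 1 - ((n:ℤ)+1) = 0 by ring]
      simp
    · rw [qBin_of_not (by omega), qBin_of_not (by omega), qBin_of_not (by omega)]; simp

lemma pascalA (n : ℕ) (k : ℤ) :
    qBin (qq^2) ((n:ℤ)+1) k =
      qBin (qq^2) (n:ℤ) (k-1) + (qq^2) ^ k * qBin (qq^2) (n:ℤ) k := by
  have hn : (0:ℤ) ≤ (n:ℤ) := by exact_mod_cast Nat.zero_le n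
  rw [qBin_symm (show (0:ℤ) ≤ (n:ℤ)+1 by positivity), pascalB n ((n:ℤ)+1-k)]
  rw [show (n:ℤ)+1-((n:ℤ)+1-k) = k by ring, show (n:ℤ)+1-k-1 = (n:ℤ)-k by ring]
  rw [← qBin_symm hn, show (n:ℤ)+1-k = (n:ℤ)-(k-1) by ring, ← qBin_symm hn]
  ring

lemma qBin_top_zero (t : ℤ) : qBin (qq^2) 0 t = if t = 0 then 1 else 0 := by
  rcases eq_or_ne t 0 with h | h
  · subst h; rw [qBin_zero le_rfl]; simp
  · rw [qBin_of_not (by omega)]; simp [h]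

lemma vandermonde (m n : ℕ) (p : ℤ) :
    qBin (qq^2) ((m:ℤ)+(n:ℤ)) p =
      ∑ j ∈ range (m+1),
        (qq^2) ^ ((j:ℤ)*((n:ℤ)-p+(j:ℤ))) * qBin (qq^2) (m:ℤ) (j:ℤ) * qBin (qq^2) (n:ℤ) (p-(j:ℤ)) := by
  induction n generalizing p with
  | zero =>
    simp only [Nat.cast_zero, add_zero, zero_sub, qBin_top_zero]
    by_cases hp : 0 ≤ p ∧ p ≤ (m:ℤ)
    · rw [Finset.sum_eq_single p.toNat]
      · rw [if_pos (by omega)]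
        rw [show ((p.toNat:ℕ):ℤ) = p by omega]
        rw [show p * (-p + p) = 0 by ring]
        simp
      · intro j _ hj
        rw [if_neg (by omega)]
        simp
      · intro hmem
        exfalso; apply hmem
        simp only [Finset.mem_range]; omega
    · rw [qBin_of_not hp, Finset.sum_eq_zero]
      intro j hj
      simp only [Finset.mem_range] at hj
      rw [if_neg (by omega)]
      simp
  | succ n ih =>
    have hcast : ((m:ℤ) + ((n+1:ℕ):ℤ)) = ((m+n:ℕ):ℤ) + 1 := by push_cast; ring
    rw [hcast, pascalA (m+n) p]
    have hmn : ((m+n:ℕ):ℤ) = (m:ℤ) + (n:ℤ) := by push_cast; ring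
    rw [hmn, ih (p-1), ih p, Finset.mul_sum, ← Finset.sum_add_distrib]
    apply Finset.sum_congr rfl
    intro j hj
    have hpa : qBin (qq^2) ((n+1:ℕ):ℤ) (p-(j:ℤ)) =
        qBin (qq^2) (n:ℤ) (p-(j:ℤ)-1) + (qq^2)^(p-(j:ℤ)) * qBin (qq^2) (n:ℤ) (p-(j:ℤ)) := by
      have : ((n+1:ℕ):ℤ) = (n:ℤ)+1 := by push_cast; ring
      rw [this, pascalA n (p-(j:ℤ))]
    rw [hpa]
    have hz : ((qq^2) ^ ((j:ℤ)*(((n+1:ℕ):ℤ)-p+(j:ℤ))) : RatFunc ℚ) * (qq^2)^(p-(j:ℤ)) =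
        (qq^2)^(p) * (qq^2)^((j:ℤ)*((n:ℤ)-p+(j:ℤ))) := by
      rw [← zpow_add₀ x2_ne_zero, ← zpow_add₀ x2_ne_zero]
      congr 1
      push_cast; ring
    have he : ((j:ℤ)*((n:ℤ)-(p-1)+(j:ℤ))) = ((j:ℤ)*(((n+1:ℕ):ℤ)-p+(j:ℤ))) := by push_cast; ring
    have he2 : p - 1 - (j:ℤ) = p - (j:ℤ) - 1 := by ring
    rw [he, he2]
    linear_combination (-(qBin (qq^2) (m:ℤ) (j:ℤ) * qBin (qq^2) (n:ℤ) (p-(j:ℤ)))) * hz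

lemma qBin_mul (N k m : ℤ) (hN : 0 ≤ N) :
    qBin (qq^2) N k * qBin (qq^2) k m = qBin (qq^2) N m * qBin (qq^2) (N-m) (k-m) := by
  by_cases hreg : 0 ≤ m ∧ m ≤ k ∧ k ≤ N
  · obtain ⟨a, rfl⟩ : ∃ a : ℕ, m = (a:ℤ) := ⟨m.toNat, by omega⟩
    obtain ⟨b, rfl⟩ : ∃ b : ℕ, k = (a:ℤ) + (b:ℤ) := ⟨(k-a).toNat, by omega⟩
    obtain ⟨c, rfl⟩ : ∃ c : ℕ, N = (a:ℤ) + (b:ℤ) + (c:ℤ) := ⟨(N-a-b).toNat, by omega⟩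
    rw [qBin_def (by omega) (by omega), qBin_def (by omega) (by omega),
      qBin_def (by omega) (by omega), qBin_def (by omega) (by omega)]
    have e1 : ((a:ℤ)+(b:ℤ)+(c:ℤ)).toNat = a+b+c := by omega
    have e2 : ((a:ℤ)+(b:ℤ)).toNat = a+b := by omega
    have e3 : (((a:ℤ)+(b:ℤ)+(c:ℤ)) - ((a:ℤ)+(b:ℤ))).toNat = c := by omega
    have e4 : ((a:ℤ):ℤ).toNat = a := by omega
    have e5 : (((a:ℤ)+(b:ℤ)) - (a:ℤ)).toNat = b := by omega
    have e6 : (((a:ℤ)+(b:ℤ)+(c:ℤ)) - (a:ℤ)).toNat = b + c := by omega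
    rw [e1, e2, e3, e4, e5, e6]
    have n1 := qPoch_ne_zero a
    have n2 := qPoch_ne_zero b
    have n3 := qPoch_ne_zero c
    have n4 := qPoch_ne_zero (a+b)
    have n5 := qPoch_ne_zero (b+c)
    field_simp
    rw [show ((a:ℤ) + (b:ℤ) + (c:ℤ) - (a:ℤ) - ((a:ℤ) + (b:ℤ) - (a:ℤ))).toNat = c by omega]
    rw [eq_div_iff n3]
  · have hL : qBin (qq^2) N k * qBin (qq^2) k m = 0 := by
      by_cases h1 : 0 ≤ k ∧ k ≤ N
      · rw [qBin_of_not (show ¬ (0 ≤ m ∧ m ≤ k) by omega)]; ring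
      · rw [qBin_of_not h1]; ring
    have hR : qBin (qq^2) N m * qBin (qq^2) (N-m) (k-m) = 0 := by
      by_cases h1 : 0 ≤ m ∧ m ≤ N
      · rw [qBin_of_not (show ¬ (0 ≤ k - m ∧ k - m ≤ N - m) by omega)]; ring
      · rw [qBin_of_not h1]; ring
    rw [hL, hR]

lemma keyF (M : ℕ) (L i : ℤ) (hML : (M:ℤ) ≤ L) :
    ∑ t ∈ range (M+1), ((-1:RatFunc ℚ))^t * (qq^2)^(t*(t-1)/2) *
        qBin (qq^2) (M:ℤ) (t:ℤ) * qBin (qq^2) (L - (t:ℤ)) i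
      = (qq^2) ^ ((M:ℤ)*(L-i)) * qBin (qq^2) (L-(M:ℤ)) (i-(M:ℤ)) := by
  induction M generalizing L i with
  | zero =>
    rw [Finset.sum_range_one]
    norm_num
    rw [qBin_zero le_rfl]
    ring
  | succ M ih =>
    have hM1 : ((M+1:ℕ):ℤ) = (M:ℤ)+1 := by push_cast; ring
    have hML' : (M:ℤ) ≤ L - 1 := by omega
    have expand : ∑ t ∈ range (M+1+1), ((-1:RatFunc ℚ))^t * (qq^2)^(t*(t-1)/2) *
          qBin (qq^2) ((M+1:ℕ):ℤ) (t:ℤ) * qBin (qq^2) (L - (t:ℤ)) i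
        = (∑ t ∈ range (M+2), ((-1:RatFunc ℚ))^t * (qq^2)^(t*(t-1)/2) *
            ((qq^2)^((M:ℤ)+1-(t:ℤ)) * qBin (qq^2) (M:ℤ) ((t:ℤ)-1)) * qBin (qq^2) (L - (t:ℤ)) i)
          + (∑ t ∈ range (M+2), ((-1:RatFunc ℚ))^t * (qq^2)^(t*(t-1)/2) *
            qBin (qq^2) (M:ℤ) (t:ℤ) * qBin (qq^2) (L - (t:ℤ)) i) := by
      rw [← Finset.sum_add_distrib]
      apply Finset.sum_congr rfl
      intro t _
      rw [hM1, pascalB M (t:ℤ)]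
      ring
    rw [expand]
    have hS2 : (∑ t ∈ range (M+2), ((-1:RatFunc ℚ))^t * (qq^2)^(t*(t-1)/2) *
            qBin (qq^2) (M:ℤ) (t:ℤ) * qBin (qq^2) (L - (t:ℤ)) i)
        = (qq^2) ^ ((M:ℤ)*(L-i)) * qBin (qq^2) (L-(M:ℤ)) (i-(M:ℤ)) := by
      have hlast : ((-1:RatFunc ℚ))^(M+1) * (qq^2)^((M+1)*((M+1)-1)/2) *
          qBin (qq^2) (M:ℤ) ((M+1:ℕ):ℤ) * qBin (qq^2) (L - ((M+1:ℕ):ℤ)) i = 0 := by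
        rw [qBin_of_not (by push_cast; omega)]; ring
      rw [Finset.sum_range_succ, hlast, add_zero]
      push_cast at hML
      exact ih L i (by omega)
    rw [hS2]
    have hS1 : (∑ t ∈ range (M+2), ((-1:RatFunc ℚ))^t * (qq^2)^(t*(t-1)/2) *
            ((qq^2)^((M:ℤ)+1-(t:ℤ)) * qBin (qq^2) (M:ℤ) ((t:ℤ)-1)) * qBin (qq^2) (L - (t:ℤ)) i)
        = -((qq^2)^(M:ℕ) * ((qq^2) ^ ((M:ℤ)*(L-1-i)) * qBin (qq^2) (L-1-(M:ℤ)) (i-(M:ℤ)))) := by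
      rw [Finset.sum_range_succ']
      have h0 : ((-1:RatFunc ℚ))^0 * (qq^2)^(0*(0-1)/2) *
          ((qq^2)^((M:ℤ)+1-((0:ℕ):ℤ)) * qBin (qq^2) (M:ℤ) (((0:ℕ):ℤ)-1)) * qBin (qq^2) (L - ((0:ℕ):ℤ)) i = 0 := by
        have hz : qBin (qq^2) (M:ℤ) (((0:ℕ):ℤ)-1) = 0 := qBin_of_not (by omega)
        rw [hz]; ring
      rw [h0, add_zero]
      rw [show -((qq^2:RatFunc ℚ)^(M:ℕ) * ((qq^2) ^ ((M:ℤ)*(L-1-i)) * qBin (qq^2) (L-1-(M:ℤ)) (i-(M:ℤ))))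
          = (-(qq^2:RatFunc ℚ)^(M:ℕ)) * ((qq^2) ^ ((M:ℤ)*(L-1-i)) * qBin (qq^2) (L-1-(M:ℤ)) (i-(M:ℤ))) by ring]
      rw [← ih (L-1) i hML', Finset.mul_sum]
      apply Finset.sum_congr rfl
      intro t _
      have e1 : (t+1)*(t+1-1)/2 = t*(t-1)/2 + t := by
        rw [← Nat.choose_two_right, ← Nat.choose_two_right, Nat.choose_succ_succ,
          Nat.choose_one_right, Nat.add_comm]
      rw [e1]
      have e2 : ((qq^2:RatFunc ℚ))^(t*(t-1)/2 + t) * (qq^2)^((M:ℤ)+1-((t+1:ℕ):ℤ)) =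
          (qq^2)^(t*(t-1)/2) * (qq^2)^(M:ℕ) := by
        rw [← zpow_natCast (qq^2) (t*(t-1)/2 + t), ← zpow_natCast (qq^2) M,
          ← zpow_natCast (qq^2) (t*(t-1)/2), ← zpow_add₀ x2_ne_zero, ← zpow_add₀ x2_ne_zero]
        congr 1
        push_cast; ring
      have e3 : L - ((t+1:ℕ):ℤ) = L - 1 - (t:ℤ) := by push_cast; ring
      have e4 : ((t+1:ℕ):ℤ) - 1 = (t:ℤ) := by push_cast; ring
      rw [e3, e4]
      linear_combination ((-1:RatFunc ℚ))^(t+1) * qBin (qq^2) (M:ℤ) (t:ℤ) *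
        qBin (qq^2) (L-1-(t:ℤ)) i * e2
    rw [hS1]
    -- final algebra
    obtain ⟨n', hn'⟩ : ∃ n' : ℕ, (n':ℤ) = L - 1 - (M:ℤ) := ⟨(L-1-(M:ℤ)).toNat, by omega⟩
    have hPB : qBin (qq^2) (L-(M:ℤ)) (i-(M:ℤ))
        = (qq^2)^(L-i) * qBin (qq^2) (L-1-(M:ℤ)) (i-(M:ℤ)-1) + qBin (qq^2) (L-1-(M:ℤ)) (i-(M:ℤ)) := by
      have := pascalB n' (i-(M:ℤ))
      rw [hn'] at this
      rw [show L - 1 - (M:ℤ) + 1 = L - (M:ℤ) by ring] at this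
      rw [show L - (M:ℤ) - (i-(M:ℤ)) = L - i by ring] at this
      exact this
    rw [hPB]
    have z1 : ((qq^2:RatFunc ℚ)) ^ ((M:ℤ)*(L-i)) * (qq^2)^(L-i) = (qq^2) ^ ((((M+1:ℕ)):ℤ)*(L-i)) := by
      rw [← zpow_add₀ x2_ne_zero]; congr 1; push_cast; ring
    have z2 : ((qq^2:RatFunc ℚ))^(M:ℕ) * (qq^2) ^ ((M:ℤ)*(L-1-i)) = (qq^2) ^ ((M:ℤ)*(L-i)) := by
      rw [← zpow_natCast (qq^2) M, ← zpow_add₀ x2_ne_zero]; congr 1; ring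
    have ecast1 : L - ((M+1:ℕ):ℤ) = L - 1 - (M:ℤ) := by push_cast; ring
    have ecast2 : i - ((M+1:ℕ):ℤ) = i - (M:ℤ) - 1 := by push_cast; ring
    rw [ecast1, ecast2]
    linear_combination qBin (qq^2) (L-1-(M:ℤ)) (i-(M:ℤ)-1) * z1
      - qBin (qq^2) (L-1-(M:ℤ)) (i-(M:ℤ)) * z2

lemma keyF' (M R : ℕ) (hMR : M ≤ R) (L i : ℤ) (hML : (M:ℤ) ≤ L) :
    ∑ t ∈ range (R+1), ((-1:RatFunc ℚ))^t * (qq^2)^(t*(t-1)/2) *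
        qBin (qq^2) (M:ℤ) (t:ℤ) * qBin (qq^2) (L - (t:ℤ)) i
      = (qq^2) ^ ((M:ℤ)*(L-i)) * qBin (qq^2) (L-(M:ℤ)) (i-(M:ℤ)) := by
  rw [← keyF M L i hML]
  symm
  apply Finset.sum_subset (Finset.range_subset_range.mpr (by omega))
  intro t _ ht
  simp only [Finset.mem_range, not_lt] at ht
  rw [qBin_of_not (show ¬ (0 ≤ (t:ℤ) ∧ (t:ℤ) ≤ (M:ℤ)) by omega)]
  ring

lemma qq_sq_exp (t : ℕ) : (qq:RatFunc ℚ)^((t:ℤ)*((t:ℤ)-1)) = (qq^2)^(t*(t-1)/2) := by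
  have h2 : 2 ∣ t*(t-1) := by
    rcases t with _|u
    · simp
    · simpa [Nat.succ_sub_one, Nat.mul_comm] using (Nat.even_mul_succ_self u).two_dvd
  have h3 : ((t*(t-1):ℕ):ℤ) = (t:ℤ)*((t:ℤ)-1) := by
    rcases t with _|u
    · simp
    · push_cast [Nat.succ_sub_one]; ring
  rw [← pow_mul, Nat.mul_div_cancel' h2, ← h3, zpow_natCast]

lemma vdm2 (k : ℕ) (a : ℤ) :
    qBin (qq^2) (2*(k:ℤ)) ((k:ℤ)-a) =
      ∑ j ∈ range (k+1), (qq^2)^((j:ℤ)*((j:ℤ)+a)) * qBin (qq^2) (k:ℤ) (j:ℤ) *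
        qBin (qq^2) (k:ℤ) ((j:ℤ)+a) := by
  have hv := vandermonde k k ((k:ℤ)-a)
  rw [show (k:ℤ)+(k:ℤ) = 2*(k:ℤ) by ring] at hv
  rw [hv]
  apply Finset.sum_congr rfl
  intro j _
  have e1 : (j:ℤ)*((k:ℤ)-((k:ℤ)-a)+(j:ℤ)) = (j:ℤ)*((j:ℤ)+a) := by ring
  have e2 : qBin (qq^2) (k:ℤ) ((k:ℤ)-a-(j:ℤ)) = qBin (qq^2) (k:ℤ) ((j:ℤ)+a) := by
    rw [qBin_symm (show (0:ℤ) ≤ (k:ℤ) by positivity)]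
    congr 1
    ring
  rw [e1, e2]

lemma qT_neg (L : ℕ) (a : ℤ) : qT qq 0 L (-a) = qT qq 0 L a := by
  unfold qT
  apply Finset.sum_congr rfl
  intro r _
  have h2 : (Even ((L:ℤ) - (-a) - r)) ↔ Even ((L:ℤ) - a - r) := by
    rw [Int.even_iff, Int.even_iff]; omega
  by_cases hc : Even ((L:ℤ)-a-r) ∧ (r:ℤ) ≤ (L:ℤ)-|a|
  · rw [if_pos hc, if_pos (by rw [h2, abs_neg]; exact hc)]
    have m1 : (((L:ℤ) - (-a) - r)/2).toNat = (((L:ℤ) + a - r)/2).toNat := by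
      omega
    have m2 : (((L:ℤ) + (-a) - r)/2).toNat = (((L:ℤ) - a - r)/2).toNat := by
      omega
    rw [m1, m2]
    ring
  · rw [if_neg (by rw [h2, abs_neg]; exact hc), if_neg hc]

lemma inner_eval (L : ℕ) (a : ℤ) (j : ℕ) :
    ∑ k ∈ range (L+1), ((-1:RatFunc ℚ))^(L-k) * qq^(((L:ℤ)-(k:ℤ))*((L:ℤ)-(k:ℤ)-1)) *
        qBin (qq^2) (L:ℤ) (k:ℤ) * qBin (qq^2) (k:ℤ) (j:ℤ) * qBin (qq^2) (k:ℤ) ((j:ℤ)+a)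
      = qBin (qq^2) (L:ℤ) ((j:ℤ)+a) * ((qq^2)^(((L:ℤ)-(j:ℤ)-a)*((L:ℤ)-(j:ℤ))) *
          qBin (qq^2) ((j:ℤ)+a) (2*(j:ℤ)+a-(L:ℤ))) := by
  have hfac : ∑ k ∈ range (L+1), ((-1:RatFunc ℚ))^(L-k) * qq^(((L:ℤ)-(k:ℤ))*((L:ℤ)-(k:ℤ)-1)) *
        qBin (qq^2) (L:ℤ) (k:ℤ) * qBin (qq^2) (k:ℤ) (j:ℤ) * qBin (qq^2) (k:ℤ) ((j:ℤ)+a)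
      = qBin (qq^2) (L:ℤ) ((j:ℤ)+a) *
        ∑ k ∈ range (L+1), ((-1:RatFunc ℚ))^(L-k) * qq^(((L:ℤ)-(k:ℤ))*((L:ℤ)-(k:ℤ)-1)) *
          qBin (qq^2) ((L:ℤ)-((j:ℤ)+a)) ((k:ℤ)-((j:ℤ)+a)) * qBin (qq^2) (k:ℤ) (j:ℤ) := by
    rw [Finset.mul_sum]
    apply Finset.sum_congr rfl
    intro k _
    have hm := qBin_mul (L:ℤ) (k:ℤ) ((j:ℤ)+a) (by positivity)
    linear_combination (((-1:RatFunc ℚ))^(L-k) * qq^(((L:ℤ)-(k:ℤ))*((L:ℤ)-(k:ℤ)-1)) *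
      qBin (qq^2) (k:ℤ) (j:ℤ)) * hm
  rw [hfac]
  by_cases hja : (j:ℤ) + a ≤ (L:ℤ) ∧ 0 ≤ (j:ℤ) + a
  · set Mn : ℕ := ((L:ℤ)-(j:ℤ)-a).toNat with hMndef
    have hMn : (Mn:ℤ) = (L:ℤ)-(j:ℤ)-a := by omega
    have hre : ∑ k ∈ range (L+1), ((-1:RatFunc ℚ))^(L-k) * qq^(((L:ℤ)-(k:ℤ))*((L:ℤ)-(k:ℤ)-1)) *
          qBin (qq^2) ((L:ℤ)-((j:ℤ)+a)) ((k:ℤ)-((j:ℤ)+a)) * qBin (qq^2) (k:ℤ) (j:ℤ)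
        = ∑ t ∈ range (L+1), ((-1:RatFunc ℚ))^t * (qq^2)^(t*(t-1)/2) *
            qBin (qq^2) (Mn:ℤ) (t:ℤ) * qBin (qq^2) ((L:ℤ) - (t:ℤ)) (j:ℤ) := by
      rw [← Finset.sum_range_reflect]
      apply Finset.sum_congr rfl
      intro t ht
      simp only [Finset.mem_range] at ht
      have ht' : t ≤ L := by omega
      have c1 : L + 1 - 1 - t = L - t := by omega
      have c2 : ((L - t : ℕ) : ℤ) = (L:ℤ) - (t:ℤ) := by omega
      have c3 : L - (L - t) = t := by omega
      rw [c1, c2, c3]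
      have c4 : (L:ℤ) - ((L:ℤ) - (t:ℤ)) = (t:ℤ) := by ring
      rw [c4, qq_sq_exp t]
      have c5 : qBin (qq^2) ((L:ℤ)-((j:ℤ)+a)) (((L:ℤ)-(t:ℤ))-((j:ℤ)+a)) =
          qBin (qq^2) (Mn:ℤ) (t:ℤ) := by
        rw [qBin_symm (show (0:ℤ) ≤ (Mn:ℤ) by omega), show (L:ℤ)-((j:ℤ)+a) = (Mn:ℤ) by omega]
        congr 1
        omega
      rw [c5]
    rw [hre, keyF' Mn L (by omega) (L:ℤ) (j:ℤ) (by omega)]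
    rw [show ((Mn:ℤ)*((L:ℤ)-(j:ℤ))) = ((L:ℤ)-(j:ℤ)-a)*((L:ℤ)-(j:ℤ)) by rw [hMn],
      show (L:ℤ)-(Mn:ℤ) = (j:ℤ)+a by omega,
      show (j:ℤ)-(Mn:ℤ) = 2*(j:ℤ)+a-(L:ℤ) by omega]
  · rw [qBin_of_not (show ¬ (0 ≤ (j:ℤ)+a ∧ (j:ℤ)+a ≤ (L:ℤ)) by omega)]
    ring

lemma zQ (m : ℤ) : ((qq^2 : RatFunc ℚ))^m = qq^(2*m) := by
  rw [show (qq^2 : RatFunc ℚ) = qq^((2:ℕ):ℤ) by rw [zpow_natCast], ← zpow_mul]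
  norm_num

lemma assemble (x y z e PL P1 P2 P3 P4 : RatFunc ℚ) (h1 : P1 ≠ 0) (h2 : P2 ≠ 0)
    (h3 : P3 ≠ 0) (h4 : P4 ≠ 0) (hx : x*(y*z) = e) :
    x * (y * (PL/(P1*P2) * (z * (P1/(P4*P3))))) = e * PL / (P2*P3*P4) := by
  field_simp
  linear_combination PL * hx

lemma final_reindex (L : ℕ) (a : ℤ) (ha : 0 ≤ a) (hL : a ≤ (L:ℤ)) :
    qq^(a^2-(L:ℤ)^2) * ∑ j ∈ range (L+1), (qq^2)^((j:ℤ)*((j:ℤ)+a)) *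
      (qBin (qq^2) (L:ℤ) ((j:ℤ)+a) * ((qq^2)^(((L:ℤ)-(j:ℤ)-a)*((L:ℤ)-(j:ℤ))) *
        qBin (qq^2) ((j:ℤ)+a) (2*(j:ℤ)+a-(L:ℤ))))
      = qT qq 0 L a := by
  rw [Finset.mul_sum, qT]
  have habs : |a| = a := abs_of_nonneg ha
  rw [← Finset.sum_filter]
  rw [← Finset.sum_filter_of_ne
    (p := fun j : ℕ => (L:ℤ) ≤ 2*(j:ℤ)+a ∧ (j:ℤ)+a ≤ (L:ℤ))
    (by
      intro j _ hne
      by_contra hcond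
      apply hne
      by_cases h1 : (L:ℤ) ≤ 2*(j:ℤ)+a
      · rw [qBin_of_not (show ¬ (0 ≤ (j:ℤ)+a ∧ (j:ℤ)+a ≤ (L:ℤ)) by omega)]
        ring
      · rw [qBin_of_not (show ¬ (0 ≤ 2*(j:ℤ)+a-(L:ℤ) ∧ 2*(j:ℤ)+a-(L:ℤ) ≤ (j:ℤ)+a) by omega)]
        ring)]
  refine Finset.sum_bij' (fun (j : ℕ) _ => (2*(j:ℤ)+a-(L:ℤ)).toNat)
    (fun (r : ℕ) _ => (((L:ℤ)-a+(r:ℤ))/2).toNat) ?_ ?_ ?_ ?_ ?_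
  · -- hi : maps into target filter
    intro j hj
    simp only [Finset.mem_filter, Finset.mem_range] at hj ⊢
    obtain ⟨hjr, hc1, hc2⟩ := hj
    refine ⟨by omega, ?_, by omega⟩
    rw [Int.even_iff]
    omega
  · -- hj : reverse map into source filter
    intro r hr
    simp only [Finset.mem_filter, Finset.mem_range] at hr ⊢
    obtain ⟨hrr, he, hr2⟩ := hr
    rw [Int.even_iff] at he
    refine ⟨by omega, by omega, by omega⟩
  · -- left_inv
    intro j hj
    simp only [Finset.mem_filter, Finset.mem_range] at hj
    show (((L:ℤ)-a+(((2*(j:ℤ)+a-(L:ℤ)).toNat:ℕ):ℤ))/2).toNat = j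
    omega
  · -- right_inv
    intro r hr
    simp only [Finset.mem_filter, Finset.mem_range] at hr
    obtain ⟨hrr, he, hr2⟩ := hr
    rw [Int.even_iff] at he
    show ((2*(((((L:ℤ)-a+(r:ℤ))/2).toNat:ℕ):ℤ)+a-(L:ℤ)).toNat : ℕ) = r
    omega
  · -- term equality
    intro j hj
    simp only [Finset.mem_filter, Finset.mem_range] at hj
    obtain ⟨hjr, hc1, hc2⟩ := hj
    have hrn : (((2*(j:ℤ)+a-(L:ℤ)).toNat : ℕ) : ℤ) = 2*(j:ℤ)+a-(L:ℤ) := by omega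
    rw [qBin_def (by omega) (by omega), qBin_def (by omega) (by omega)]
    have t1 : ((L:ℤ)).toNat = L := by omega
    have t2 : (((L:ℤ) - a - ((2*(j:ℤ)+a-(L:ℤ)).toNat:ℤ)) / 2).toNat = ((L:ℤ)-(j:ℤ)-a).toNat := by omega
    have t3 : (((L:ℤ) + a - ((2*(j:ℤ)+a-(L:ℤ)).toNat:ℤ)) / 2).toNat = ((L:ℤ)-(j:ℤ)).toNat := by omega
    have t4 : ((j:ℤ)+a - (2*(j:ℤ)+a-(L:ℤ))).toNat = ((L:ℤ)-(j:ℤ)).toNat := by omega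
    have t5 : ((L:ℤ) - ((j:ℤ)+a)).toNat = ((L:ℤ)-(j:ℤ)-a).toNat := by omega
    rw [t1, t2, t3, t4, t5]
    -- exponent identity
    have hexp : (qq:RatFunc ℚ)^(a^2-(L:ℤ)^2) * ((qq^2)^((j:ℤ)*((j:ℤ)+a)) *
        (qq^2)^(((L:ℤ)-(j:ℤ)-a)*((L:ℤ)-(j:ℤ)))) =
        qq ^ ((((2*(j:ℤ)+a-(L:ℤ)).toNat:ℕ):ℤ) * ((((2*(j:ℤ)+a-(L:ℤ)).toNat:ℕ):ℤ) - 0)) := by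
      rw [zQ, zQ, ← zpow_add₀ qq_ne_zero, ← zpow_add₀ qq_ne_zero, hrn]
      congr 1
      ring
    have n1 := qPoch_ne_zero ((j:ℤ)+a).toNat
    have n2 := qPoch_ne_zero ((L:ℤ)-(j:ℤ)-a).toNat
    have n3 := qPoch_ne_zero ((L:ℤ)-(j:ℤ)).toNat
    have n4 := qPoch_ne_zero ((2*(j:ℤ)+a-(L:ℤ)).toNat)
    exact assemble _ _ _ _ _ _ _ _ _ n1 n2 n3 n4 hexp

lemma core (L : ℕ) (a : ℤ) (ha : 0 ≤ a) (hL : a ≤ (L:ℤ)) :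
    qT qq 0 L a = ∑ k ∈ range (L+1), (-1:RatFunc ℚ)^(L-k) *
      qq^(((L:ℤ)-(k:ℤ))*((L:ℤ)-(k:ℤ)-1) + a^2 - (L:ℤ)^2) *
      qBin (qq^2) (L:ℤ) (k:ℤ) * qBin (qq^2) (2*(k:ℤ)) ((k:ℤ)-a) := by
  symm
  calc
    ∑ k ∈ range (L+1), (-1:RatFunc ℚ)^(L-k) *
        qq^(((L:ℤ)-(k:ℤ))*((L:ℤ)-(k:ℤ)-1) + a^2 - (L:ℤ)^2) *
        qBin (qq^2) (L:ℤ) (k:ℤ) * qBin (qq^2) (2*(k:ℤ)) ((k:ℤ)-a)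
      = qq^(a^2-(L:ℤ)^2) * ∑ k ∈ range (L+1), ((-1:RatFunc ℚ)^(L-k) *
          qq^(((L:ℤ)-(k:ℤ))*((L:ℤ)-(k:ℤ)-1)) * qBin (qq^2) (L:ℤ) (k:ℤ) *
          qBin (qq^2) (2*(k:ℤ)) ((k:ℤ)-a)) := by
        rw [Finset.mul_sum]
        apply Finset.sum_congr rfl
        intro k _
        have hsplit : (qq:RatFunc ℚ)^(((L:ℤ)-(k:ℤ))*((L:ℤ)-(k:ℤ)-1) + a^2 - (L:ℤ)^2) =
            qq^(((L:ℤ)-(k:ℤ))*((L:ℤ)-(k:ℤ)-1)) * qq^(a^2-(L:ℤ)^2) := by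
          rw [← zpow_add₀ qq_ne_zero]
          congr 1
          ring
        rw [hsplit]
        ring
    _ = qq^(a^2-(L:ℤ)^2) * ∑ k ∈ range (L+1), ∑ j ∈ range (L+1),
          ((qq^2)^((j:ℤ)*((j:ℤ)+a)) * ((-1:RatFunc ℚ)^(L-k) *
            qq^(((L:ℤ)-(k:ℤ))*((L:ℤ)-(k:ℤ)-1)) * qBin (qq^2) (L:ℤ) (k:ℤ) *
            qBin (qq^2) (k:ℤ) (j:ℤ) * qBin (qq^2) (k:ℤ) ((j:ℤ)+a))) := by
        congr 1
        apply Finset.sum_congr rfl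
        intro k hk
        simp only [Finset.mem_range] at hk
        rw [vdm2 k a]
        rw [Finset.sum_subset (Finset.range_subset_range.mpr (show k+1 ≤ L+1 by omega))
          (by
            intro j _ hj
            simp only [Finset.mem_range, not_lt] at hj
            rw [qBin_of_not (show ¬ (0 ≤ (j:ℤ) ∧ (j:ℤ) ≤ (k:ℤ)) by omega)]
            ring)]
        rw [Finset.mul_sum]
        apply Finset.sum_congr rfl
        intro j _
        ring
    _ = qq^(a^2-(L:ℤ)^2) * ∑ j ∈ range (L+1),
          ((qq^2)^((j:ℤ)*((j:ℤ)+a)) * ∑ k ∈ range (L+1),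
            ((-1:RatFunc ℚ)^(L-k) * qq^(((L:ℤ)-(k:ℤ))*((L:ℤ)-(k:ℤ)-1)) *
              qBin (qq^2) (L:ℤ) (k:ℤ) * qBin (qq^2) (k:ℤ) (j:ℤ) *
              qBin (qq^2) (k:ℤ) ((j:ℤ)+a))) := by
        congr 1
        rw [Finset.sum_comm]
        apply Finset.sum_congr rfl
        intro j _
        rw [Finset.mul_sum]
    _ = qq^(a^2-(L:ℤ)^2) * ∑ j ∈ range (L+1),
          ((qq^2)^((j:ℤ)*((j:ℤ)+a)) * (qBin (qq^2) (L:ℤ) ((j:ℤ)+a) *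
            ((qq^2)^(((L:ℤ)-(j:ℤ)-a)*((L:ℤ)-(j:ℤ))) *
              qBin (qq^2) ((j:ℤ)+a) (2*(j:ℤ)+a-(L:ℤ))))) := by
        congr 1
        apply Finset.sum_congr rfl
        intro j _
        rw [inner_eval L a j]
    _ = qT qq 0 L a := final_reindex L a ha hL

theorem stmt4 (L : ℕ) (a : ℤ) (h : |a| ≤ (L : ℤ)) :
    qT qq 0 L a =
      ∑ k ∈ Finset.range (L + 1),
        (-1 : RatFunc ℚ) ^ (L - k) *
          qq ^ (((L : ℤ) - k) * ((L : ℤ) - k - 1) + a ^ 2 - (L : ℤ) ^ 2) *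
          qBin (qq ^ 2) (L : ℤ) (k : ℤ) * qBin (qq ^ 2) (2 * (k : ℤ)) ((k : ℤ) - a) := by
  rcases le_or_gt 0 a with ha | ha
  · exact core L a ha (by rwa [abs_of_nonneg ha] at h)
  · have ha' : 0 ≤ -a := by omega
    have h' : -a ≤ (L:ℤ) := by rwa [abs_of_neg ha] at h
    have hc := core L (-a) ha' h'
    rw [qT_neg] at hc
    rw [hc]
    apply Finset.sum_congr rfl
    intro k _
    have e1 : ((L:ℤ)-(k:ℤ))*((L:ℤ)-(k:ℤ)-1) + (-a)^2 - (L:ℤ)^2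
        = ((L:ℤ)-(k:ℤ))*((L:ℤ)-(k:ℤ)-1) + a^2 - (L:ℤ)^2 := by ring
    have e2 : qBin (qq^2) (2*(k:ℤ)) ((k:ℤ)-(-a)) = qBin (qq^2) (2*(k:ℤ)) ((k:ℤ)-a) := by
      rw [qBin_symm (show (0:ℤ) ≤ 2*(k:ℤ) by positivity)]
      congr 1
      ring
    rw [e1, e2]
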